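/- arXiv:2309.03481 — 5 statements merged into one kernel-verified Lean document; each statement's English description precedes it below -/
import Mathlib

section
/- For every point (t,r,θ,φ,p_t,p_r,p_θ,p_φ) in the Boyer–Lindquist phase-space chart U with (p_t,p_r,p_θ,p_φ) ≠ (0,0,0,0), the following are equivalent: (i) P₀ = 0 at the point and all eight partial derivatives of P₀ (with respect to t, r, θ, φ, p_t, p_r, p_θ, p_φ) vanish at the point; (ii) r = r_s/2 and p_t + (c/r_s)·p_φ = 0. In other words, the set of double characteristics of the rescaled extremal Kerr wave symbol P₀ over U is exactly the set Σ₂ = {r = r_s/2, p_t + (c/r_s)·p_φ = 0}. -/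
noncomputable section

/-- Σ = r² + (r_s²/4)·cos²θ -/
def Sig (rs r th : ℝ) : ℝ := r ^ 2 + rs ^ 2 / 4 * Real.cos th ^ 2

/-- Δ = (r − r_s/2)² -/
def Del (rs r : ℝ) : ℝ := (r - rs / 2) ^ 2

/-- D = r² + r_s²/4 + (r_s·r/Σ)·(r_s²/4)·sin²θ -/
def Dfun (rs r th : ℝ) : ℝ :=
  r ^ 2 + rs ^ 2 / 4 + rs * r / Sig rs r th * (rs ^ 2 / 4) * Real.sin th ^ 2

/-- The Δ-rescaled principal symbol P₀ of the operator P = Δ·□_g for the extremal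
Kerr metric, in Boyer–Lindquist phase-space coordinates (t,r,θ,φ,p_t,p_r,p_θ,p_φ). -/
def P0 (rs c t r th ph pt pr pth pph : ℝ) : ℝ :=
  Sig rs r th * Real.sin th *
    (Dfun rs r th / c ^ 2 * pt ^ 2 + rs ^ 2 * r / (c * Sig rs r th) * (pt * pph)
      - Del rs r ^ 2 / Sig rs r th * pr ^ 2 - Del rs r / Sig rs r th * pth ^ 2
      - 1 / Real.sin th ^ 2 * (1 - rs * r / Sig rs r th) * pph ^ 2)

lemma Sig_pos (rs r th : ℝ) (hr : 0 < r) : 0 < Sig rs r th := by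
  unfold Sig; positivity

set_option maxHeartbeats 2000000 in
lemma key (rs c t r th ph pt pr pth pph : ℝ) (hc : c ≠ 0) (hS : Sig rs r th ≠ 0)
    (hs : Real.sin th ≠ 0) :
    c^2 * Real.sin th * P0 rs c t r th ph pt pr pth pph
      = Real.sin th^2 * (((r^2+rs^2/4)*pt + rs/2*(c*pph))^2
          - c^2*Del rs r^2*pr^2 - c^2*Del rs r*pth^2)
        - Del rs r * (c*pph + rs/2*Real.sin th^2*pt)^2 := by
  have hSig2 : Sig rs r th = r^2+rs^2/4 - (rs/2)^2*Real.sin th^2 := by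
    unfold Sig; rw [Real.cos_sq']; ring
  unfold P0 Dfun Del
  field_simp
  rw [hSig2]
  ring

lemma deriv_quadratic (a b c0 x : ℝ) :
    deriv (fun s => a*s^2 + b*s + c0) x = 2*a*x + b := by
  have h : HasDerivAt (fun s : ℝ => a*s^2 + b*s + c0) (a*(2*x)+b) x := by
    have h1 : HasDerivAt (fun s : ℝ => a*s^2) (a*(2*x)) x := by
      simpa using (hasDerivAt_pow 2 x).const_mul a
    have h2 : HasDerivAt (fun s : ℝ => b*s) b x := by
      simpa using (hasDerivAt_id x).const_mul b
    exact (h1.add h2).add_const c0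
  rw [h.deriv]; ring

set_option maxHeartbeats 1000000 in
lemma quad_pt (rs c t r th ph pr pth pph : ℝ) (hc : c ≠ 0) (hS : Sig rs r th ≠ 0)
    (hs : Real.sin th ≠ 0) :
    (fun s => c^2*Real.sin th * P0 rs c t r th ph s pr pth pph)
    = fun s => (Real.sin th^2*(r^2+rs^2/4)^2 - Del rs r*(rs/2*Real.sin th^2)^2)*s^2
        + (2*Real.sin th^2*(r^2+rs^2/4)*(rs/2*(c*pph))
            - Del rs r*(2*(c*pph)*(rs/2*Real.sin th^2)))*s
        + (Real.sin th^2*((rs/2*(c*pph))^2 - c^2*Del rs r^2*pr^2 - c^2*Del rs r*pth^2)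
            - Del rs r*(c*pph)^2) := by
  funext s; rw [key rs c t r th ph s pr pth pph hc hS hs]; ring

set_option maxHeartbeats 1000000 in
lemma quad_pph (rs c t r th ph pt pr pth : ℝ) (hc : c ≠ 0) (hS : Sig rs r th ≠ 0)
    (hs : Real.sin th ≠ 0) :
    (fun s => c^2*Real.sin th * P0 rs c t r th ph pt pr pth s)
    = fun s => (Real.sin th^2*(rs/2*c)^2 - Del rs r*c^2)*s^2
        + (2*Real.sin th^2*(r^2+rs^2/4)*pt*(rs/2*c)
            - Del rs r*(2*(rs/2*Real.sin th^2*pt)*c))*s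
        + (Real.sin th^2*((r^2+rs^2/4)^2*pt^2 - c^2*Del rs r^2*pr^2 - c^2*Del rs r*pth^2)
            - Del rs r*(rs/2*Real.sin th^2*pt)^2) := by
  funext s; rw [key rs c t r th ph pt pr pth s hc hS hs]; ring

set_option maxHeartbeats 1000000 in
lemma quad_pr (rs c t r th ph pt pth pph : ℝ) (hc : c ≠ 0) (hS : Sig rs r th ≠ 0)
    (hs : Real.sin th ≠ 0) :
    (fun s => c^2*Real.sin th * P0 rs c t r th ph pt s pth pph)
    = fun s => (-(Real.sin th^2*c^2*Del rs r^2))*s^2 + 0*s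
        + (Real.sin th^2*(((r^2+rs^2/4)*pt + rs/2*(c*pph))^2 - c^2*Del rs r*pth^2)
            - Del rs r*(c*pph + rs/2*Real.sin th^2*pt)^2) := by
  funext s; rw [key rs c t r th ph pt s pth pph hc hS hs]; ring

set_option maxHeartbeats 1000000 in
lemma quad_pth (rs c t r th ph pt pr pph : ℝ) (hc : c ≠ 0) (hS : Sig rs r th ≠ 0)
    (hs : Real.sin th ≠ 0) :
    (fun s => c^2*Real.sin th * P0 rs c t r th ph pt pr s pph)
    = fun s => (-(Real.sin th^2*c^2*Del rs r))*s^2 + 0*s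
        + (Real.sin th^2*(((r^2+rs^2/4)*pt + rs/2*(c*pph))^2 - c^2*Del rs r^2*pr^2)
            - Del rs r*(c*pph + rs/2*Real.sin th^2*pt)^2) := by
  funext s; rw [key rs c t r th ph pt pr s pph hc hS hs]; ring


/-- on the chart U = {r > 0, sin θ ≠ 0}, for nonzero covectors, the point is a
double characteristic of P₀ (P₀ = 0 and all eight partial derivatives of P₀ vanish) iff it
belongs to Σ₂ = {r = r_s/2, p_t + (c/r_s)·p_φ = 0}. -/
theorem double_characteristics_eq_Sigma2
    (rs c : ℝ) (hrs : 0 < rs) (hc : 0 < c)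
    (t r th ph pt pr pth pph : ℝ)
    (hr : 0 < r) (hth : Real.sin th ≠ 0)
    (hp : ¬(pt = 0 ∧ pr = 0 ∧ pth = 0 ∧ pph = 0)) :
    (P0 rs c t r th ph pt pr pth pph = 0 ∧
      deriv (fun s => P0 rs c s r th ph pt pr pth pph) t = 0 ∧
      deriv (fun s => P0 rs c t s th ph pt pr pth pph) r = 0 ∧
      deriv (fun s => P0 rs c t r s ph pt pr pth pph) th = 0 ∧
      deriv (fun s => P0 rs c t r th s pt pr pth pph) ph = 0 ∧
      deriv (fun s => P0 rs c t r th ph s pr pth pph) pt = 0 ∧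
      deriv (fun s => P0 rs c t r th ph pt s pth pph) pr = 0 ∧
      deriv (fun s => P0 rs c t r th ph pt pr s pph) pth = 0 ∧
      deriv (fun s => P0 rs c t r th ph pt pr pth s) pph = 0)
    ↔ (r = rs / 2 ∧ pt + c / rs * pph = 0) := by
  have hc' : c ≠ 0 := ne_of_gt hc
  have hrs' : rs ≠ 0 := ne_of_gt hrs
  have hSpos : 0 < Sig rs r th := Sig_pos rs r th hr
  have hS : Sig rs r th ≠ 0 := ne_of_gt hSpos
  have hSig2 : Sig rs r th = r^2+rs^2/4 - (rs/2)^2*Real.sin th^2 := by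
    unfold Sig; rw [Real.cos_sq']; ring
  have hKpos : (0:ℝ) < r^2+rs^2/4 := by positivity
  have hne : c^2*Real.sin th ≠ 0 := mul_ne_zero (pow_ne_zero 2 hc') hth
  constructor
  · rintro ⟨h0, hdt, hdr, hdth, hdph, hdpt, hdpr, hdpth, hdpph⟩
    -- extract polynomial equations from the momentum derivatives
    have Ept : 2*(Real.sin th^2*(r^2+rs^2/4)^2 - Del rs r*(rs/2*Real.sin th^2)^2)*pt
        + (2*Real.sin th^2*(r^2+rs^2/4)*(rs/2*(c*pph))
            - Del rs r*(2*(c*pph)*(rs/2*Real.sin th^2))) = 0 := by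
      have h1 : deriv (fun s => c^2*Real.sin th * P0 rs c t r th ph s pr pth pph) pt = 0 := by
        rw [deriv_const_mul_field, hdpt, mul_zero]
      rwa [quad_pt rs c t r th ph pr pth pph hc' hS hth, deriv_quadratic] at h1
    have Epph : 2*(Real.sin th^2*(rs/2*c)^2 - Del rs r*c^2)*pph
        + (2*Real.sin th^2*(r^2+rs^2/4)*pt*(rs/2*c)
            - Del rs r*(2*(rs/2*Real.sin th^2*pt)*c)) = 0 := by
      have h1 : deriv (fun s => c^2*Real.sin th * P0 rs c t r th ph pt pr pth s) pph = 0 := by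
        rw [deriv_const_mul_field, hdpph, mul_zero]
      rwa [quad_pph rs c t r th ph pt pr pth hc' hS hth, deriv_quadratic] at h1
    have Epr : 2*(-(Real.sin th^2*c^2*Del rs r^2))*pr + 0 = 0 := by
      have h1 : deriv (fun s => c^2*Real.sin th * P0 rs c t r th ph pt s pth pph) pr = 0 := by
        rw [deriv_const_mul_field, hdpr, mul_zero]
      rwa [quad_pr rs c t r th ph pt pth pph hc' hS hth, deriv_quadratic] at h1
    have Epth : 2*(-(Real.sin th^2*c^2*Del rs r))*pth + 0 = 0 := by
      have h1 : deriv (fun s => c^2*Real.sin th * P0 rs c t r th ph pt pr s pph) pth = 0 := by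
        rw [deriv_const_mul_field, hdpth, mul_zero]
      rwa [quad_pth rs c t r th ph pt pr pph hc' hS hth, deriv_quadratic] at h1
    have ept : (((r^2+rs^2/4))*pt + rs/2*(c*pph)) * (Real.sin th^2*(r^2+rs^2/4))
        - (c*pph + rs/2*Real.sin th^2*pt) * (Del rs r*(rs/2*Real.sin th^2)) = 0 := by
      linear_combination Ept/2
    have epph : (((r^2+rs^2/4))*pt + rs/2*(c*pph)) * (Real.sin th^2*(rs/2*c))
        - (c*pph + rs/2*Real.sin th^2*pt) * (Del rs r * c) = 0 := by
      linear_combination Epph/2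
    by_cases hDel : Del rs r = 0
    · have hre : r = rs/2 := by
        have h := hDel
        unfold Del at h
        have := pow_eq_zero_iff (two_ne_zero) |>.mp h
        linarith
      subst hre
      refine ⟨rfl, ?_⟩
      have hA1 : (((rs/2)^2+rs^2/4))*pt + rs/2*(c*pph) = 0 := by
        have h : ((((rs/2)^2+rs^2/4))*pt + rs/2*(c*pph))
            * (Real.sin th^2*((rs/2)^2+rs^2/4)) = 0 := by
          linear_combination ept + ((c*pph + rs/2*Real.sin th^2*pt)*(rs/2*Real.sin th^2))*hDel
        exact (mul_eq_zero.mp h).resolve_right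
          (mul_ne_zero (pow_ne_zero 2 hth) (ne_of_gt hKpos))
      have h2 : (rs*pt + c*pph) * (rs/2) = 0 := by linear_combination hA1
      have h3 := (mul_eq_zero.mp h2).resolve_right (by positivity)
      field_simp
      linear_combination h3
    · exfalso
      have hDnn : (0:ℝ) ≤ Del rs r := by unfold Del; positivity
      have hDpos : 0 < Del rs r := lt_of_le_of_ne hDnn (Ne.symm hDel)
      have hpr0 : pr = 0 := by
        have h : pr * (Real.sin th^2*c^2*Del rs r^2) = 0 := by linear_combination -Epr/2
        exact (mul_eq_zero.mp h).resolve_right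
          (mul_ne_zero (mul_ne_zero (pow_ne_zero 2 hth) (pow_ne_zero 2 hc'))
            (pow_ne_zero 2 hDel))
      have hpth0 : pth = 0 := by
        have h : pth * (Real.sin th^2*c^2*Del rs r) = 0 := by linear_combination -Epth/2
        exact (mul_eq_zero.mp h).resolve_right
          (mul_ne_zero (mul_ne_zero (pow_ne_zero 2 hth) (pow_ne_zero 2 hc')) hDel)
      have hA1 : ((r^2+rs^2/4))*pt + rs/2*(c*pph) = 0 := by
        have h : (((r^2+rs^2/4))*pt + rs/2*(c*pph)) * (Real.sin th^2 * Sig rs r th * c) = 0 := by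
          linear_combination c*ept - rs/2*Real.sin th^2*epph
            + ((((r^2+rs^2/4))*pt + rs/2*(c*pph))*Real.sin th^2*c)*hSig2
        exact (mul_eq_zero.mp h).resolve_right
          (mul_ne_zero (mul_ne_zero (pow_ne_zero 2 hth) hS) hc')
      have hB1 : c*pph + rs/2*Real.sin th^2*pt = 0 := by
        have h : (c*pph + rs/2*Real.sin th^2*pt) * (Del rs r * c) = 0 := by
          linear_combination -epph + (Real.sin th^2*(rs/2*c))*hA1
        exact (mul_eq_zero.mp h).resolve_right (mul_ne_zero hDel hc')
      have hpt0 : pt = 0 := by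
        have h : pt * Sig rs r th = 0 := by
          linear_combination hA1 - rs/2*hB1 + pt*hSig2
        exact (mul_eq_zero.mp h).resolve_right hS
      have hpph0 : pph = 0 := by
        have h : pph * c = 0 := by linear_combination hB1 - rs/2*Real.sin th^2*hpt0
        exact (mul_eq_zero.mp h).resolve_right hc'
      exact hp ⟨hpt0, hpr0, hpth0, hpph0⟩
  · rintro ⟨hre, hpt⟩
    subst hre
    have hDel : Del rs (rs/2) = 0 := by unfold Del; ring
    have hcph : c*pph = -(rs*pt) := by
      field_simp at hpt
      linarith
    have hA1 : (((rs/2)^2+rs^2/4))*pt + rs/2*(c*pph) = 0 := by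
      rw [hcph]; ring
    -- P0 = 0
    have hP0 : P0 rs c t (rs/2) th ph pt pr pth pph = 0 := by
      have hk := key rs c t (rs/2) th ph pt pr pth pph hc' hS hth
      rw [hDel, hA1] at hk
      have h : c^2*Real.sin th * P0 rs c t (rs/2) th ph pt pr pth pph = 0 := by
        rw [hk]; ring
      exact (mul_eq_zero.mp h).resolve_left hne
    refine ⟨hP0, ?_, ?_, ?_, ?_, ?_, ?_, ?_, ?_⟩
    · -- t derivative
      have hconst : (fun s => P0 rs c s (rs/2) th ph pt pr pth pph)
          = fun _ => P0 rs c t (rs/2) th ph pt pr pth pph := rfl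
      rw [hconst]; exact deriv_const _ _
    · -- r derivative
      have hev : (fun s => P0 rs c t s th ph pt pr pth pph) =ᶠ[nhds (rs/2)]
          (fun s => (c^2*Real.sin th)⁻¹ * ((s - rs/2)^2 *
            (Real.sin th^2*((s+rs/2)^2*pt^2 - (s-rs/2)^2*(c^2*pr^2) - c^2*pth^2)
              - (c*pph + rs/2*Real.sin th^2*pt)^2))) := by
        filter_upwards [isOpen_Ioi.mem_nhds (by positivity : (0:ℝ) < rs/2)] with s hs0
        have hSs : Sig rs s th ≠ 0 := ne_of_gt (Sig_pos rs s th hs0)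
        have h2 : c^2*Real.sin th * P0 rs c t s th ph pt pr pth pph
            = (s - rs/2)^2 *
              (Real.sin th^2*((s+rs/2)^2*pt^2 - (s-rs/2)^2*(c^2*pr^2) - c^2*pth^2)
                - (c*pph + rs/2*Real.sin th^2*pt)^2) := by
          rw [key rs c t s th ph pt pr pth pph hc' hSs hth, hcph]
          unfold Del; ring
        rw [← h2, inv_mul_cancel_left₀ hne]
      rw [hev.deriv_eq, deriv_const_mul_field]
      have hD : deriv (fun s : ℝ => (s - rs/2)^2 *
          (Real.sin th^2*((s+rs/2)^2*pt^2 - (s-rs/2)^2*(c^2*pr^2) - c^2*pth^2)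
            - (c*pph + rs/2*Real.sin th^2*pt)^2)) (rs/2) = 0 := by
        have h1 : HasDerivAt (fun s : ℝ => (s - rs/2)^2)
            (2*(rs/2 - rs/2)^1*1) (rs/2) := ((hasDerivAt_id (rs/2)).sub_const (rs/2)).pow 2
        have hg : HasDerivAt (fun s : ℝ =>
            Real.sin th^2*((s+rs/2)^2*pt^2 - (s-rs/2)^2*(c^2*pr^2) - c^2*pth^2)
              - (c*pph + rs/2*Real.sin th^2*pt)^2)
            (Real.sin th^2*((2*(rs/2+rs/2)^1*1)*pt^2 - (2*(rs/2-rs/2)^1*1)*(c^2*pr^2) - 0))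
            (rs/2) := by
          have ha : HasDerivAt (fun s : ℝ => (s+rs/2)^2*pt^2)
              ((2*(rs/2+rs/2)^1*1)*pt^2) (rs/2) :=
            (((hasDerivAt_id (rs/2)).add_const (rs/2)).pow 2).mul_const (pt^2)
          have hb : HasDerivAt (fun s : ℝ => (s-rs/2)^2*(c^2*pr^2))
              ((2*(rs/2-rs/2)^1*1)*(c^2*pr^2)) (rs/2) :=
            (((hasDerivAt_id (rs/2)).sub_const (rs/2)).pow 2).mul_const (c^2*pr^2)
          have hcst : HasDerivAt (fun _ : ℝ => c^2*pth^2) 0 (rs/2) := hasDerivAt_const _ _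
          exact (((ha.sub hb).sub hcst).const_mul (Real.sin th^2)).sub_const _
        have h : HasDerivAt (fun s : ℝ => (s - rs/2)^2 *
            (Real.sin th^2*((s+rs/2)^2*pt^2 - (s-rs/2)^2*(c^2*pr^2) - c^2*pth^2)
              - (c*pph + rs/2*Real.sin th^2*pt)^2)) _ (rs/2) := h1.mul hg
        rw [h.deriv]
        norm_num
      rw [hD, mul_zero]
    · -- θ derivative
      have hev : (fun s => P0 rs c t (rs/2) s ph pt pr pth pph) =ᶠ[nhds th]
          (fun _ => (0:ℝ)) := by
        have hopen : IsOpen {x : ℝ | Real.sin x ≠ 0} :=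
          isOpen_ne.preimage Real.continuous_sin
        filter_upwards [hopen.mem_nhds hth] with s hss
        have hSs : Sig rs (rs/2) s ≠ 0 := ne_of_gt (Sig_pos rs (rs/2) s (by positivity))
        have hk := key rs c t (rs/2) s ph pt pr pth pph hc' hSs hss
        rw [hDel, hA1] at hk
        have h : c^2*Real.sin s * P0 rs c t (rs/2) s ph pt pr pth pph = 0 := by
          rw [hk]; ring
        exact (mul_eq_zero.mp h).resolve_left (mul_ne_zero (pow_ne_zero 2 hc') hss)
      rw [hev.deriv_eq]; exact deriv_const _ _
    · -- φ derivative
      have hconst : (fun s => P0 rs c t (rs/2) th s pt pr pth pph)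
          = fun _ => P0 rs c t (rs/2) th ph pt pr pth pph := rfl
      rw [hconst]; exact deriv_const _ _
    · -- pt derivative
      have hrel : deriv (fun s => P0 rs c t (rs/2) th ph s pr pth pph) pt
          = (c^2*Real.sin th)⁻¹
            * deriv (fun s => c^2*Real.sin th * P0 rs c t (rs/2) th ph s pr pth pph) pt := by
        rw [deriv_const_mul_field, inv_mul_cancel_left₀ hne]
      rw [hrel, quad_pt rs c t (rs/2) th ph pr pth pph hc' hS hth, deriv_quadratic]
      have h2 : 2*(Real.sin th^2*((rs/2)^2+rs^2/4)^2 - Del rs (rs/2)*(rs/2*Real.sin th^2)^2)*pt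
          + (2*Real.sin th^2*((rs/2)^2+rs^2/4)*(rs/2*(c*pph))
              - Del rs (rs/2)*(2*(c*pph)*(rs/2*Real.sin th^2))) = 0 := by
        linear_combination (2*Real.sin th^2*((rs/2)^2+rs^2/4))*hA1
          + ((rs/2*Real.sin th^2)^2*pt*2 + 2*(c*pph)*(rs/2*Real.sin th^2)
              - Real.sin th^2*rs*c*pph*2 - Real.sin th^4*rs^2*pt)*hDel
      rw [h2, mul_zero]
    · -- pr derivative
      have hrel : deriv (fun s => P0 rs c t (rs/2) th ph pt s pth pph) pr
          = (c^2*Real.sin th)⁻¹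
            * deriv (fun s => c^2*Real.sin th * P0 rs c t (rs/2) th ph pt s pth pph) pr := by
        rw [deriv_const_mul_field, inv_mul_cancel_left₀ hne]
      rw [hrel, quad_pr rs c t (rs/2) th ph pt pth pph hc' hS hth, deriv_quadratic]
      have h2 : 2*(-(Real.sin th^2*c^2*Del rs (rs/2)^2))*pr + 0 = 0 := by
        linear_combination (-(Real.sin th^2*c^2*(Del rs (rs/2)))*pr*2)*hDel
      rw [h2, mul_zero]
    · -- pth derivative
      have hrel : deriv (fun s => P0 rs c t (rs/2) th ph pt pr s pph) pth
          = (c^2*Real.sin th)⁻¹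
            * deriv (fun s => c^2*Real.sin th * P0 rs c t (rs/2) th ph pt pr s pph) pth := by
        rw [deriv_const_mul_field, inv_mul_cancel_left₀ hne]
      rw [hrel, quad_pth rs c t (rs/2) th ph pt pr pph hc' hS hth, deriv_quadratic]
      have h2 : 2*(-(Real.sin th^2*c^2*Del rs (rs/2)))*pth + 0 = 0 := by
        linear_combination (-(Real.sin th^2*c^2)*pth*2)*hDel
      rw [h2, mul_zero]
    · -- pph derivative
      have hrel : deriv (fun s => P0 rs c t (rs/2) th ph pt pr pth s) pph
          = (c^2*Real.sin th)⁻¹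
            * deriv (fun s => c^2*Real.sin th * P0 rs c t (rs/2) th ph pt pr pth s) pph := by
        rw [deriv_const_mul_field, inv_mul_cancel_left₀ hne]
      rw [hrel, quad_pph rs c t (rs/2) th ph pt pr pth hc' hS hth, deriv_quadratic]
      have h2 : 2*(Real.sin th^2*(rs/2*c)^2 - Del rs (rs/2)*c^2)*pph
          + (2*Real.sin th^2*((rs/2)^2+rs^2/4)*pt*(rs/2*c)
              - Del rs (rs/2)*(2*(rs/2*Real.sin th^2*pt)*c)) = 0 := by
        linear_combination (2*Real.sin th^2*(rs/2*c))*hA1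
          + (c^2*pph*2 + 2*(rs/2*Real.sin th^2*pt)*c
              - Real.sin th^2*rs*c*pt*2 - c^2*pph*4)*hDel
      rw [h2, mul_zero]
end
end

section
/- For every point (t,r,θ,φ,p_t,p_r,p_θ,p_φ) in the Boyer–Lindquist phase-space chart U with r = r_s/2 (i.e. on the extremal horizon), the rescaled principal symbol factors as a perfect square: P₀ = (r_s⁴·sinθ/(4·c²))·(p_t + (c/r_s)·p_φ)². -/
noncomputable section

set_option maxHeartbeats 2000000 in
/-- on the extremal horizon r = r_s/2, the rescaled principal symbol is a
perfect square: P₀ = (r_s⁴·sinθ/(4c²))·(p_t + (c/r_s)·p_φ)². -/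
theorem P0_perfect_square_on_horizon
    (rs c : ℝ) (hrs : 0 < rs) (hc : 0 < c)
    (t r th ph pt pr pth pph : ℝ)
    (hr : 0 < r) (hth : Real.sin th ≠ 0)
    (hhor : r = rs / 2) :
    P0 rs c t r th ph pt pr pth pph
      = rs ^ 4 * Real.sin th / (4 * c ^ 2) * (pt + c / rs * pph) ^ 2 := by
  subst hhor
  have hcos : Real.cos th ^ 2 = 1 - Real.sin th ^ 2 := by
    have := Real.sin_sq_add_cos_sq th; linarith
  have hs2 : (2 : ℝ) - Real.sin th ^ 2 ≠ 0 := by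
    nlinarith [Real.sin_sq_le_one th]
  have hS : Sig rs (rs/2) th = rs ^ 2 * (2 - Real.sin th ^ 2) / 4 := by
    unfold Sig; rw [hcos]; ring
  unfold P0 Dfun Del
  rw [hS]
  field_simp [hrs.ne', hc.ne', hs2]
  ring
end
end

section
/- For every point (t,r,θ,φ,p_t,p_r,p_θ,p_φ) in the Boyer–Lindquist phase-space chart U with r ≠ r_s/2 and (p_t,p_r,p_θ,p_φ) ≠ (0,0,0,0), the vector of momentum partial derivatives (∂P₀/∂p_t, ∂P₀/∂p_r, ∂P₀/∂p_θ, ∂P₀/∂p_φ) at the point is nonzero. In particular, P₀ has no double characteristics away from the horizon {r = r_s/2}, i.e. the operator is of real principal type there. -/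
noncomputable section

lemma deriv_quad (a b d x : ℝ) : deriv (fun s : ℝ => a * s ^ 2 + b * s + d) x = 2 * a * x + b := by
  have h : HasDerivAt (fun s : ℝ => a * s ^ 2 + b * s + d) (a * (2 * x ^ 1) + b * 1) x :=
    (((hasDerivAt_pow 2 x).const_mul a).add ((hasDerivAt_id x).const_mul b)).add_const d
  rw [h.deriv]; ring


/-- away from the horizon (r ≠ r_s/2) and for nonzero covectors, the vector
of momentum partial derivatives (∂P₀/∂p_t, ∂P₀/∂p_r, ∂P₀/∂p_θ, ∂P₀/∂p_φ) is nonzero,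
i.e. P₀ has no double characteristics there (real principal type). -/
theorem momentum_gradient_nonzero_off_horizon
    (rs c : ℝ) (hrs : 0 < rs) (hc : 0 < c)
    (t r th ph pt pr pth pph : ℝ)
    (hr : 0 < r) (hth : Real.sin th ≠ 0)
    (hoff : r ≠ rs / 2)
    (hp : ¬(pt = 0 ∧ pr = 0 ∧ pth = 0 ∧ pph = 0)) :
    ¬(deriv (fun s => P0 rs c t r th ph s pr pth pph) pt = 0 ∧
      deriv (fun s => P0 rs c t r th ph pt s pth pph) pr = 0 ∧
      deriv (fun s => P0 rs c t r th ph pt pr s pph) pth = 0 ∧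
      deriv (fun s => P0 rs c t r th ph pt pr pth s) pph = 0) := by
  rintro ⟨h1, h2, h3, h4⟩
  have hS : 0 < Sig rs r th := by unfold Sig; positivity
  have hSne : Sig rs r th ≠ 0 := ne_of_gt hS
  have hΔ : 0 < Del rs r := by
    unfold Del
    have : r - rs / 2 ≠ 0 := sub_ne_zero.mpr hoff
    positivity
  have hΔne : Del rs r ≠ 0 := ne_of_gt hΔ
  have hcne : c ≠ 0 := ne_of_gt hc
  have e1 : (fun s => P0 rs c t r th ph s pr pth pph)
      = fun s => (Sig rs r th * Real.sin th * (Dfun rs r th / c ^ 2)) * s ^ 2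
        + (Sig rs r th * Real.sin th * (rs ^ 2 * r / (c * Sig rs r th)) * pph) * s
        + (Sig rs r th * Real.sin th * (- (Del rs r ^ 2 / Sig rs r th) * pr ^ 2
            - Del rs r / Sig rs r th * pth ^ 2
            - 1 / Real.sin th ^ 2 * (1 - rs * r / Sig rs r th) * pph ^ 2)) := by
    funext s; unfold P0; ring
  have e2 : (fun s => P0 rs c t r th ph pt s pth pph)
      = fun s => (- (Sig rs r th * Real.sin th * (Del rs r ^ 2 / Sig rs r th))) * s ^ 2
        + (0 : ℝ) * s
        + (Sig rs r th * Real.sin th * (Dfun rs r th / c ^ 2 * pt ^ 2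
            + rs ^ 2 * r / (c * Sig rs r th) * (pt * pph)
            - Del rs r / Sig rs r th * pth ^ 2
            - 1 / Real.sin th ^ 2 * (1 - rs * r / Sig rs r th) * pph ^ 2)) := by
    funext s; unfold P0; ring
  have e3 : (fun s => P0 rs c t r th ph pt pr s pph)
      = fun s => (- (Sig rs r th * Real.sin th * (Del rs r / Sig rs r th))) * s ^ 2
        + (0 : ℝ) * s
        + (Sig rs r th * Real.sin th * (Dfun rs r th / c ^ 2 * pt ^ 2
            + rs ^ 2 * r / (c * Sig rs r th) * (pt * pph)
            - Del rs r ^ 2 / Sig rs r th * pr ^ 2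
            - 1 / Real.sin th ^ 2 * (1 - rs * r / Sig rs r th) * pph ^ 2)) := by
    funext s; unfold P0; ring
  have e4 : (fun s => P0 rs c t r th ph pt pr pth s)
      = fun s => (- (Sig rs r th * Real.sin th
            * (1 / Real.sin th ^ 2 * (1 - rs * r / Sig rs r th)))) * s ^ 2
        + (Sig rs r th * Real.sin th * (rs ^ 2 * r / (c * Sig rs r th)) * pt) * s
        + (Sig rs r th * Real.sin th * (Dfun rs r th / c ^ 2 * pt ^ 2
            - Del rs r ^ 2 / Sig rs r th * pr ^ 2
            - Del rs r / Sig rs r th * pth ^ 2)) := by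
    funext s; unfold P0; ring
  rw [e1, deriv_quad] at h1
  rw [e2, deriv_quad] at h2
  rw [e3, deriv_quad] at h3
  rw [e4, deriv_quad] at h4
  -- pr = 0 and pth = 0
  have hpr : pr = 0 := by
    field_simp [hth, hSne] at h2
    have h2' : (2 * Real.sin th * Del rs r ^ 2) * pr = 0 := by linarith
    exact (mul_eq_zero.mp h2').resolve_left
      (mul_ne_zero (mul_ne_zero two_ne_zero hth) (pow_ne_zero 2 hΔne))
  have hpth : pth = 0 := by
    field_simp [hth, hSne] at h3
    have h3' : (2 * Real.sin th * Del rs r) * pth = 0 := by linarith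
    exact (mul_eq_zero.mp h3').resolve_left
      (mul_ne_zero (mul_ne_zero two_ne_zero hth) hΔne)
  -- the D·Σ product as a polynomial
  have hDS : Dfun rs r th * Sig rs r th
      = (r ^ 2 + rs ^ 2 / 4) * Sig rs r th + rs * r * (rs ^ 2 / 4) * Real.sin th ^ 2 := by
    unfold Dfun; field_simp
  -- linear system in pt, pph
  field_simp [hth, hSne, hcne] at h1 h4
  have key1 : c * Sig rs r th * Real.sin th
      * (2 * (Dfun rs r th * Sig rs r th) * pt + c * rs ^ 2 * r * pph) = 0 := by
    linear_combination (c * Sig rs r th) * h1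
  have key2 : Sig rs r th ^ 2 * Real.sin th
      * (rs ^ 2 * r * Real.sin th ^ 2 * pt - 2 * c * (Sig rs r th - rs * r) * pph) = 0 := by
    linear_combination (Sig rs r th ^ 2 * Real.sin th) * h4
  have F1 : 2 * (Dfun rs r th * Sig rs r th) * pt + c * rs ^ 2 * r * pph = 0 :=
    (mul_eq_zero.mp key1).resolve_left
      (mul_ne_zero (mul_ne_zero hcne hSne) hth)
  have F2 : rs ^ 2 * r * Real.sin th ^ 2 * pt - 2 * c * (Sig rs r th - rs * r) * pph = 0 :=
    (mul_eq_zero.mp key2).resolve_left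
      (mul_ne_zero (pow_ne_zero 2 hSne) hth)
  rw [hDS] at F1
  have hpy : Real.cos th ^ 2 = 1 - Real.sin th ^ 2 := by
    have := Real.sin_sq_add_cos_sq th; linarith
  -- determinant identity: 4·DΣ·(Σ − rs r) + rs⁴ r² sin²θ = 4 Σ² Δ
  have key : c * pph * (4 * Sig rs r th ^ 2 * Del rs r) = 0 := by
    simp only [Sig, Del] at F1 F2 ⊢
    rw [hpy] at F1 F2 ⊢
    linear_combination (Real.sin th ^ 2 * rs ^ 2 * r) * F1
      - (2 * ((r ^ 2 + rs ^ 2 / 4) * (r ^ 2 + rs ^ 2 / 4 * (1 - Real.sin th ^ 2))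
          + rs * r * (rs ^ 2 / 4) * Real.sin th ^ 2)) * F2
  have hpph : pph = 0 := by
    rcases mul_eq_zero.mp key with h | h
    · rcases mul_eq_zero.mp h with h' | h'
      · exact absurd h' hcne
      · exact h'
    · exfalso
      have : 0 < 4 * Sig rs r th ^ 2 * Del rs r := by positivity
      linarith
  have hpt : pt = 0 := by
    rw [hpph] at F2
    have hs2 : Real.sin th ^ 2 ≠ 0 := pow_ne_zero 2 hth
    have : rs ^ 2 * r * Real.sin th ^ 2 * pt = 0 := by linarith
    rcases mul_eq_zero.mp this with h | h
    · exfalso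
      rcases mul_eq_zero.mp h with h' | h'
      · rcases mul_eq_zero.mp h' with h'' | h''
        · exact (pow_ne_zero 2 (ne_of_gt hrs)) h''
        · exact (ne_of_gt hr) h''
      · exact hs2 h'
    · exact h
  exact hp ⟨hpt, hpr, hpth, hpph⟩
end
end

section
/- For every point (t,r,θ,φ,p_t,p_r,p_θ,p_φ) in the Boyer–Lindquist phase-space chart U with r ≠ r_s/2, the subprincipal-symbol expression s := Δ·Σ_{μ∈{t,r,θ,φ}} ∂_μ( Σ·sinθ·g^{μν}p_ν ) + Σ_{μ∈{t,r,θ,φ}} ∂_μ( Δ·Σ·sinθ·g^{μν}p_ν ) (where ∂_μ denotes the partial derivative in the coordinate q^μ and summation over ν is implied) equals 6·sinθ·(r − r_s/2)³·p_r + 2·(r − r_s/2)²·cosθ·p_θ. Consequently s extends continuously across the horizon with value 0 at every point with r = r_s/2; i.e. the subprincipal symbol of P = Δ·□_g vanishes on the horizon cotangent set. -/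
noncomputable section

/-- g^{tt} = −D/(c²·Δ) -/
def gtt (rs c r th : ℝ) : ℝ := -(Dfun rs r th) / (c ^ 2 * Del rs r)

/-- g^{tφ} = g^{φt} = −r_s²·r/(2·c·Δ·Σ) -/
def gtph (rs c r th : ℝ) : ℝ := -(rs ^ 2 * r) / (2 * c * Del rs r * Sig rs r th)

/-- g^{rr} = Δ/Σ -/
def grr (rs r th : ℝ) : ℝ := Del rs r / Sig rs r th

/-- g^{θθ} = 1/Σ -/
def gthth (rs r th : ℝ) : ℝ := 1 / Sig rs r th

/-- g^{φφ} = (1/(Δ·sin²θ))·(1 − r_s·r/Σ) -/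
def gphph (rs r th : ℝ) : ℝ :=
  1 / (Del rs r * Real.sin th ^ 2) * (1 - rs * r / Sig rs r th)

/-- off the horizon, the subprincipal-symbol expression
s = Δ·Σ_μ ∂_μ(√(−g)·g^{μν}p_ν) + Σ_μ ∂_μ(Δ·√(−g)·g^{μν}p_ν), with √(−g) = Σ·sinθ,
equals 6·sinθ·(r − r_s/2)³·p_r + 2·(r − r_s/2)²·cosθ·p_θ; consequently it extends
continuously across the horizon with value 0 there. -/
theorem subprincipal_symbol_vanishes_on_horizon
    (rs c : ℝ) (hrs : 0 < rs) (hc : 0 < c)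
    (t r th ph pt pr pth pph : ℝ)
    (hr : 0 < r) (hth : Real.sin th ≠ 0) (hoff : r ≠ rs / 2) :
    (Del rs r *
      (deriv (fun _s : ℝ =>
          Sig rs r th * Real.sin th * (gtt rs c r th * pt + gtph rs c r th * pph)) t
        + deriv (fun r' =>
          Sig rs r' th * Real.sin th * (grr rs r' th * pr)) r
        + deriv (fun th' =>
          Sig rs r th' * Real.sin th' * (gthth rs r th' * pth)) th
        + deriv (fun _s : ℝ =>
          Sig rs r th * Real.sin th * (gtph rs c r th * pt + gphph rs r th * pph)) ph)
      + (deriv (fun _s : ℝ =>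
          Del rs r * (Sig rs r th * Real.sin th * (gtt rs c r th * pt + gtph rs c r th * pph))) t
        + deriv (fun r' =>
          Del rs r' * (Sig rs r' th * Real.sin th * (grr rs r' th * pr))) r
        + deriv (fun th' =>
          Del rs r * (Sig rs r th' * Real.sin th' * (gthth rs r th' * pth))) th
        + deriv (fun _s : ℝ =>
          Del rs r * (Sig rs r th * Real.sin th * (gtph rs c r th * pt + gphph rs r th * pph))) ph)
      = 6 * Real.sin th * (r - rs / 2) ^ 3 * pr
        + 2 * (r - rs / 2) ^ 2 * Real.cos th * pth)
    ∧ Filter.Tendsto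
        (fun r' => 6 * Real.sin th * (r' - rs / 2) ^ 3 * pr
          + 2 * (r' - rs / 2) ^ 2 * Real.cos th * pth)
        (nhds (rs / 2)) (nhds 0) := by
  have hSigpos : ∀ r' th', 0 < r' → 0 < Sig rs r' th' := by
    intro r' th' h
    have : 0 < r' ^ 2 := by positivity
    have h2 : 0 ≤ rs ^ 2 / 4 * Real.cos th' ^ 2 := by positivity
    unfold Sig; linarith
  have hSig : Sig rs r th ≠ 0 := (hSigpos r th hr).ne'
  constructor
  · -- r-derivative 1: eventually equal to sinθ * pr * (r'-rs/2)^2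
    have hev : ∀ᶠ r' in nhds r, Sig rs r' th ≠ 0 := by
      have hcont : Continuous (fun r' => Sig rs r' th) := by
        unfold Sig; continuity
      exact hcont.continuousAt.eventually_ne hSig
    have hd1 : deriv (fun r' => Sig rs r' th * Real.sin th * (grr rs r' th * pr)) r
        = Real.sin th * pr * (2 * (r - rs / 2)) := by
      have heq : (fun r' => Sig rs r' th * Real.sin th * (grr rs r' th * pr))
          =ᶠ[nhds r] (fun r' => Real.sin th * pr * (r' - rs / 2) ^ 2) := by
        filter_upwards [hev] with r' h
        unfold grr Del
        field_simp
      rw [heq.deriv_eq]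
      have : HasDerivAt (fun r' : ℝ => Real.sin th * pr * (r' - rs / 2) ^ 2)
          (Real.sin th * pr * (2 * (r - rs / 2) ^ 1 * 1)) r := by
        exact (((hasDerivAt_id r).sub_const (rs / 2)).pow 2).const_mul (Real.sin th * pr)
      simpa using this.deriv
    have hd2 : deriv (fun r' => Del rs r' * (Sig rs r' th * Real.sin th * (grr rs r' th * pr))) r
        = Real.sin th * pr * (4 * (r - rs / 2) ^ 3) := by
      have heq : (fun r' => Del rs r' * (Sig rs r' th * Real.sin th * (grr rs r' th * pr)))
          =ᶠ[nhds r] (fun r' => Real.sin th * pr * (r' - rs / 2) ^ 4) := by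
        filter_upwards [hev] with r' h
        unfold grr Del
        field_simp
      rw [heq.deriv_eq]
      have : HasDerivAt (fun r' : ℝ => Real.sin th * pr * (r' - rs / 2) ^ 4)
          (Real.sin th * pr * (4 * (r - rs / 2) ^ 3 * 1)) r := by
        exact (((hasDerivAt_id r).sub_const (rs / 2)).pow 4).const_mul (Real.sin th * pr)
      simpa using this.deriv
    have hd3 : deriv (fun th' => Sig rs r th' * Real.sin th' * (gthth rs r th' * pth)) th
        = Real.cos th * pth := by
      have heq : (fun th' => Sig rs r th' * Real.sin th' * (gthth rs r th' * pth))
          = (fun th' => pth * Real.sin th') := by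
        funext th'
        have h := (hSigpos r th' hr).ne'
        unfold gthth
        field_simp
      rw [heq]
      have : HasDerivAt (fun th' : ℝ => pth * Real.sin th') (pth * Real.cos th) th :=
        (Real.hasDerivAt_sin th).const_mul pth
      rw [this.deriv]; ring
    have hd4 : deriv (fun th' => Del rs r * (Sig rs r th' * Real.sin th' * (gthth rs r th' * pth))) th
        = Del rs r * (Real.cos th * pth) := by
      have heq : (fun th' => Del rs r * (Sig rs r th' * Real.sin th' * (gthth rs r th' * pth)))
          = (fun th' => (Del rs r * pth) * Real.sin th') := by
        funext th'
        have h := (hSigpos r th' hr).ne'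
        unfold gthth
        field_simp
      rw [heq]
      have : HasDerivAt (fun th' : ℝ => (Del rs r * pth) * Real.sin th')
          ((Del rs r * pth) * Real.cos th) th :=
        (Real.hasDerivAt_sin th).const_mul (Del rs r * pth)
      rw [this.deriv]; ring
    rw [hd1, hd2, hd3, hd4, deriv_const, deriv_const, deriv_const, deriv_const]
    unfold Del
    ring
  · have hc : Continuous (fun r' => 6 * Real.sin th * (r' - rs / 2) ^ 3 * pr
        + 2 * (r' - rs / 2) ^ 2 * Real.cos th * pth) := by continuity
    have := hc.tendsto (rs / 2)
    simpa using this
end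
end

section
/- On the whole Boyer–Lindquist phase-space chart U (including the horizon r = r_s/2), the rescaled principal symbol factors as P₀ = (Σ·sinθ·D/c²)·[ (p_t + Ψ)² − Δ·Φ ]. Equivalently, at every point with r ≠ r_s/2 the full symbol g^{μν}p_μp_ν of the extremal Kerr wave operator equals g^{tt}·[ (p_t + Ψ)² − Δ·Φ ]. -/
noncomputable section

/-- Ψ = ((r_s·c/2)·(r_s·r/Σ)/D)·p_φ -/
def Psi (rs c r th pph : ℝ) : ℝ :=
  rs * c / 2 * (rs * r / Sig rs r th) / Dfun rs r th * pph

/-- Φ = (c²/D)·[(Δ/Σ)·p_r² + (1/Σ)·p_θ² + (1/(D·sin²θ))·p_φ²] -/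
def Phi (rs c r th pr pth pph : ℝ) : ℝ :=
  c ^ 2 / Dfun rs r th *
    (Del rs r / Sig rs r th * pr ^ 2 + 1 / Sig rs r th * pth ^ 2
      + 1 / (Dfun rs r th * Real.sin th ^ 2) * pph ^ 2)

set_option maxHeartbeats 4000000 in
/-- on the whole chart U (including the horizon), the rescaled principal
symbol factors as P₀ = (Σ·sinθ·D/c²)·[(p_t + Ψ)² − Δ·Φ]; equivalently, off the horizon,
g^{μν}p_μp_ν = g^{tt}·[(p_t + Ψ)² − Δ·Φ]. -/
theorem P0_factorization
    (rs c : ℝ) (hrs : 0 < rs) (hc : 0 < c)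
    (t r th ph pt pr pth pph : ℝ)
    (hr : 0 < r) (hth : Real.sin th ≠ 0) :
    P0 rs c t r th ph pt pr pth pph
      = Sig rs r th * Real.sin th * Dfun rs r th / c ^ 2 *
          ((pt + Psi rs c r th pph) ^ 2 - Del rs r * Phi rs c r th pr pth pph)
    ∧ (r ≠ rs / 2 →
        gtt rs c r th * pt ^ 2 + 2 * gtph rs c r th * (pt * pph)
          + Del rs r / Sig rs r th * pr ^ 2 + 1 / Sig rs r th * pth ^ 2
          + gphph rs r th * pph ^ 2
        = gtt rs c r th *
            ((pt + Psi rs c r th pph) ^ 2 - Del rs r * Phi rs c r th pr pth pph)) := by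
  have hcos : Real.cos th ^ 2 = 1 - Real.sin th ^ 2 := Real.cos_sq' th
  have hS : (0:ℝ) < Sig rs r th := by
    unfold Sig; nlinarith [sq_nonneg (Real.cos th)]
  have hD : (0:ℝ) < Dfun rs r th := by
    have h1 : (0:ℝ) ≤ rs * r / Sig rs r th * (rs ^ 2 / 4) * Real.sin th ^ 2 := by
      have := div_nonneg (by positivity : (0:ℝ) ≤ rs * r) hS.le
      positivity
    unfold Dfun; nlinarith
  have key : Dfun rs r th * (1 - rs * r / Sig rs r th)
      = Del rs r - rs ^ 2 / 4 * (rs * r / Sig rs r th) ^ 2 * Real.sin th ^ 2 := by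
    unfold Dfun Del Sig
    unfold Sig at hS
    rw [hcos] at hS ⊢
    set S := r ^ 2 + rs ^ 2 / 4 * (1 - Real.sin th ^ 2) with hSdef
    field_simp [hS.ne']
    ring
  have e3 : Del rs r / (Dfun rs r th * Real.sin th ^ 2)
        - rs ^ 2 / 4 * (rs * r / Sig rs r th) ^ 2 / Dfun rs r th
      = 1 / Real.sin th ^ 2 * (1 - rs * r / Sig rs r th) := by
    have h1 : Del rs r / (Dfun rs r th * Real.sin th ^ 2)
          - rs ^ 2 / 4 * (rs * r / Sig rs r th) ^ 2 / Dfun rs r th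
        = (Del rs r - rs ^ 2 / 4 * (rs * r / Sig rs r th) ^ 2 * Real.sin th ^ 2)
          / (Dfun rs r th * Real.sin th ^ 2) := by
      field_simp
    rw [h1, ← key, mul_comm (Dfun rs r th) (Real.sin th ^ 2),
      mul_comm (Dfun rs r th) (1 - rs * r / Sig rs r th),
      mul_div_mul_right _ _ hD.ne', one_div, inv_mul_eq_div]
  constructor
  · have e2 : Sig rs r th * Real.sin th * Dfun rs r th / c ^ 2 *
          ((pt + Psi rs c r th pph) ^ 2 - Del rs r * Phi rs c r th pr pth pph)
        = Sig rs r th * Real.sin th *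
            (Dfun rs r th / c ^ 2 * pt ^ 2 + rs ^ 2 * r / (c * Sig rs r th) * (pt * pph)
              - Del rs r ^ 2 / Sig rs r th * pr ^ 2 - Del rs r / Sig rs r th * pth ^ 2
              - (Del rs r / (Dfun rs r th * Real.sin th ^ 2)
                  - rs ^ 2 / 4 * (rs * r / Sig rs r th) ^ 2 / Dfun rs r th) * pph ^ 2) := by
      unfold Psi Phi
      field_simp [hS.ne', hD.ne']
      ring
    rw [e2]
    unfold P0
    linear_combination Sig rs r th * Real.sin th * pph ^ 2 * e3
  · intro hne
    have hDel : (0:ℝ) < Del rs r := by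
      unfold Del
      exact (sq_nonneg _).lt_of_ne' (pow_ne_zero 2 (sub_ne_zero.mpr hne))
    have e3' : gphph rs r th
        = 1 / (Dfun rs r th * Real.sin th ^ 2)
          - rs ^ 2 / 4 * (rs * r / Sig rs r th) ^ 2 / (Del rs r * Dfun rs r th) := by
      have h1 : 1 / (Dfun rs r th * Real.sin th ^ 2)
            - rs ^ 2 / 4 * (rs * r / Sig rs r th) ^ 2 / (Del rs r * Dfun rs r th)
          = (Del rs r - rs ^ 2 / 4 * (rs * r / Sig rs r th) ^ 2 * Real.sin th ^ 2)
            / (Del rs r * Dfun rs r th * Real.sin th ^ 2) := by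
        field_simp [hDel.ne', hD.ne']
      rw [h1, ← key,
        show Del rs r * Dfun rs r th * Real.sin th ^ 2
          = Dfun rs r th * (Del rs r * Real.sin th ^ 2) by ring,
        mul_div_mul_left _ _ hD.ne']
      unfold gphph
      rw [one_div, inv_mul_eq_div]
    have e2' : gtt rs c r th *
          ((pt + Psi rs c r th pph) ^ 2 - Del rs r * Phi rs c r th pr pth pph)
        = gtt rs c r th * pt ^ 2 + 2 * gtph rs c r th * (pt * pph)
          + Del rs r / Sig rs r th * pr ^ 2 + 1 / Sig rs r th * pth ^ 2
          + (1 / (Dfun rs r th * Real.sin th ^ 2)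
              - rs ^ 2 / 4 * (rs * r / Sig rs r th) ^ 2 / (Del rs r * Dfun rs r th)) * pph ^ 2 := by
      unfold gtt gtph Psi Phi
      field_simp [hS.ne', hD.ne', hDel.ne']
      ring
    rw [e2', e3']
end
end
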